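/- Let S be the zero-union of finite semigroups S₁, …, Sₙ, with NC the set of indices of non-commutative Sᵢ. If |NC| ≥ 3, or |NC| ≥ 2 and some G(Sᵢ) with i ∈ NC has an edge, then the girth of G(S) is 3. If |NC| = 2 and G(Sᵢ) has no edges for both i ∈ NC, then the girth of G(S) is 4. -/

import Mathlib

open SimpleGraph

/-- The center of a magma/semigroup: elements commuting with everything. -/
def sgCenter (S : Type*) [Mul S] : Set S := {x | ∀ y, x * y = y * x}

/-- The commuting graph of a semigroup: vertices are non-central elements,
distinct vertices adjacent iff they commute. -/
def commGraph (S : Type*) [Mul S] : SimpleGraph {x : S // x ∉ sgCenter S} where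
  Adj x y := x ≠ y ∧ (x : S) * y = (y : S) * x
  symm := ⟨fun x y ⟨h, h'⟩ => ⟨h.symm, h'.symm⟩⟩
  loopless := ⟨fun x ⟨h, _⟩ => h rfl⟩

/-- The extended commuting graph of a semigroup: vertices are all elements,
distinct vertices adjacent iff they commute. -/
def extCommGraph (S : Type*) [Mul S] : SimpleGraph S where
  Adj x y := x ≠ y ∧ x * y = y * x
  symm := ⟨fun x y ⟨h, h'⟩ => ⟨h.symm, h'.symm⟩⟩
  loopless := ⟨fun x ⟨h, _⟩ => h rfl⟩

/-- The graph join of two graphs on disjoint vertex sets. -/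
def graphJoin {V W : Type*} (G : SimpleGraph V) (H : SimpleGraph W) :
    SimpleGraph (V ⊕ W) where
  Adj x y := match x, y with
    | .inl a, .inl b => G.Adj a b
    | .inr a, .inr b => H.Adj a b
    | .inl _, .inr _ => True
    | .inr _, .inl _ => True
  symm := ⟨by rintro (a|a) (b|b) h <;> simp_all [SimpleGraph.Adj.symm]⟩
  loopless := ⟨by rintro (a|a) h; exacts [G.loopless.irrefl a h, H.loopless.irrefl a h]⟩

/-- The graph join of a family of graphs on disjoint vertex sets. -/
def graphJoinFam {ι : Type*} {V : ι → Type*} (G : ∀ i, SimpleGraph (V i)) :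
    SimpleGraph (Σ i, V i) where
  Adj x y := x.1 ≠ y.1 ∨ ∃ a b : V x.1, (G x.1).Adj a b ∧ x = ⟨x.1, a⟩ ∧ y = ⟨x.1, b⟩
  symm := ⟨by
    rintro ⟨i, a⟩ ⟨j, b⟩ (h | ⟨a', b', hadj, h1, h2⟩)
    · exact Or.inl h.symm
    · cases h1; cases h2
      exact Or.inr ⟨b', a, hadj.symm, rfl, rfl⟩⟩
  loopless := ⟨by
    rintro ⟨i, a⟩ (h | ⟨a', b', hadj, h1, h2⟩)
    · exact h rfl
    · cases h1
      cases h2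
      exact (G i).loopless.irrefl _ hadj⟩

/-- The strong product of two simple graphs. -/
def strongProd {V W : Type*} (G : SimpleGraph V) (H : SimpleGraph W) :
    SimpleGraph (V × W) where
  Adj x y := x ≠ y ∧ (x.1 = y.1 ∨ G.Adj x.1 y.1) ∧ (x.2 = y.2 ∨ H.Adj x.2 y.2)
  symm := ⟨fun x y ⟨h, h1, h2⟩ =>
    ⟨h.symm, h1.imp Eq.symm (fun h => G.symm.symm _ _ h), h2.imp Eq.symm (fun h => H.symm.symm _ _ h)⟩⟩
  loopless := ⟨fun x ⟨h, _⟩ => h rfl⟩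

/-- The strong product of a family of simple graphs. -/
def strongProdFam {ι : Type*} {V : ι → Type*} (G : ∀ i, SimpleGraph (V i)) :
    SimpleGraph (∀ i, V i) where
  Adj x y := x ≠ y ∧ ∀ i, x i = y i ∨ (G i).Adj (x i) (y i)
  symm := ⟨fun x y ⟨h, h'⟩ => ⟨h.symm, fun i => (h' i).imp Eq.symm (fun h => (G i).symm.symm _ _ h)⟩⟩
  loopless := ⟨fun x ⟨h, _⟩ => h rfl⟩

/-- `p` is a left path in the commuting graph of `S`. -/
def IsLeftPath {S : Type*} [Mul S] {u v : {x : S // x ∉ sgCenter S}}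
    (p : (commGraph S).Walk u v) : Prop :=
  p.IsPath ∧ u ≠ v ∧ ∀ w ∈ p.support, (u : S) * (w : S) = (v : S) * (w : S)

/-- The commuting graph of `S` contains a left path. -/
def HasLeftPath (S : Type*) [Mul S] : Prop :=
  ∃ (u v : {x : S // x ∉ sgCenter S}) (p : (commGraph S).Walk u v), IsLeftPath p

/-- The knit degree of `S`: the length of a shortest left path in its commuting graph. -/
noncomputable def knitDegree (S : Type*) [Mul S] : ℕ :=
  sInf {m | ∃ (u v : {x : S // x ∉ sgCenter S}) (p : (commGraph S).Walk u v),
    IsLeftPath p ∧ p.length = m}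

/-- `p` is a *-left path in the extended commuting graph of `S`. -/
def IsStarLeftPath {S : Type*} [Mul S] {u v : S}
    (p : (extCommGraph S).Walk u v) : Prop :=
  p.IsPath ∧ u ≠ v ∧ ∀ w ∈ p.support, u * w = v * w

/-- The extended commuting graph of `S` contains a *-left path. -/
def HasStarLeftPath (S : Type*) [Mul S] : Prop :=
  ∃ (u v : S) (p : (extCommGraph S).Walk u v), IsStarLeftPath p

/-- The *-knit degree of `S`. -/
noncomputable def starKnitDegree (S : Type*) [Mul S] : ℕ :=
  sInf {m | ∃ (u v : S) (p : (extCommGraph S).Walk u v), IsStarLeftPath p ∧ p.length = m}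

/-- The zero-union of a family of semigroups: their disjoint union plus a new zero. -/
def ZeroUnion {n : ℕ} (S : Fin n → Type*) : Type _ := Option (Σ i, S i)

instance {n : ℕ} (S : Fin n → Type*) [∀ i, Mul (S i)] : Mul (ZeroUnion S) where
  mul x y := match x, y with
    | some ⟨i, a⟩, some ⟨j, b⟩ =>
      if h : j = i then some ⟨i, a * (h ▸ b)⟩ else none
    | _, _ => none

section Helpers

open SimpleGraph Walk

lemma egirth_le_of_cycle {α : Type*} {G : SimpleGraph α} {a : α} {w : G.Walk a a}
    (hw : w.IsCycle) : G.egirth ≤ w.length := by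
  rw [SimpleGraph.egirth]
  exact iInf_le_of_le a (iInf_le_of_le w (iInf_le_of_le hw le_rfl))

lemma egirth_eq_three_of_triangle {α : Type*} {G : SimpleGraph α} {a b c : α}
    (hab : G.Adj a b) (hbc : G.Adj b c) (hca : G.Adj c a) : G.egirth = 3 := by
  refine le_antisymm ?_ SimpleGraph.three_le_egirth
  have hw : (Walk.cons hab (Walk.cons hbc hca.toWalk)).IsCycle := by
    have h1 := hab.ne
    have h2 := hbc.ne
    have h3 := hca.ne
    simp [Walk.isCycle_def, Walk.isTrail_def, Sym2.eq_iff]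
    aesop
  have := egirth_le_of_cycle hw
  simpa using this

lemma four_le_egirth_of_triangleFree {α : Type*} {G : SimpleGraph α}
    (hfree : ∀ x y z, G.Adj x y → G.Adj y z → G.Adj z x → False) : 4 ≤ G.egirth := by
  rw [SimpleGraph.le_egirth]
  intro a w hw
  have h3 := hw.three_le_length
  rcases Nat.lt_or_ge w.length 4 with h4 | h4
  · have hlen : w.length = 3 := by omega
    exfalso
    cases w with
    | nil => simp at hlen
    | cons h1 p => cases p with
      | nil => simp at hlen
      | cons h2 q => cases q with
        | nil => simp at hlen
        | cons h3' r => cases r with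
          | nil => exact hfree _ _ _ h1 h2 h3'
          | cons h4' s => simp [Walk.length_cons] at hlen
  · exact_mod_cast h4

lemma egirth_eq_four_of_square {α : Type*} {G : SimpleGraph α} {a b c d : α}
    (hab : G.Adj a b) (hbc : G.Adj b c) (hcd : G.Adj c d) (hda : G.Adj d a)
    (hac : a ≠ c) (hbd : b ≠ d)
    (hfree : ∀ x y z, G.Adj x y → G.Adj y z → G.Adj z x → False) :
    G.egirth = 4 := by
  refine le_antisymm ?_ (four_le_egirth_of_triangleFree hfree)
  have hw : (Walk.cons hab (Walk.cons hbc (Walk.cons hcd hda.toWalk))).IsCycle := by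
    have h1 := hab.ne
    have h2 := hbc.ne
    have h3 := hcd.ne
    have h4 := hda.ne
    simp [Walk.isCycle_def, Walk.isTrail_def, Sym2.eq_iff]
    aesop
  have := egirth_le_of_cycle hw
  simpa using this

variable {n : ℕ} {S : Fin n → Type*} [∀ i, Mul (S i)]

/-- Embedding of a component element into the zero-union. -/
def zu (i : Fin n) (a : S i) : ZeroUnion S := Option.some (Sigma.mk i a)

/-- The zero of the zero-union. -/
def z0 : ZeroUnion S := Option.none

@[simp] lemma zu_inj_iff (i : Fin n) (a b : S i) : zu i a = zu i b ↔ a = b := by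
  constructor
  · intro h
    have h2 : (⟨i, a⟩ : Σ i, S i) = ⟨i, b⟩ := Option.some_injective _ h
    simpa using h2
  · rintro rfl
    rfl

lemma zu_fst_eq {i j : Fin n} {a : S i} {b : S j} (h : zu i a = zu j b) : i = j := by
  have h2 : (⟨i, a⟩ : Σ i, S i) = ⟨j, b⟩ := Option.some_injective _ h
  exact congrArg Sigma.fst h2

lemma zu_mul_def (i j : Fin n) (a : S i) (b : S j) :
    zu i a * zu j b =
      if h : j = i then zu i (a * (h ▸ b)) else z0 := rfl

lemma zu_mul_same (i : Fin n) (a b : S i) :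
    zu i a * zu i (b) = zu i (a * b) := by
  rw [zu_mul_def, dif_pos rfl]

lemma zu_mul_ne {i j : Fin n} (h : j ≠ i) (a : S i) (b : S j) :
    zu i a * zu j b = z0 := by
  rw [zu_mul_def, dif_neg h]

lemma zu_not_center {i : Fin n} {a : S i} (ha : a ∉ sgCenter (S i)) :
    zu i a ∉ sgCenter (ZeroUnion S) := by
  intro h
  refine ha fun b => ?_
  have := h (zu i (b))
  rw [zu_mul_same, zu_mul_same] at this
  exact (zu_inj_iff _ _ _).mp this

lemma zu_center {i : Fin n} {a : S i} (ha : a ∈ sgCenter (S i)) :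
    zu i a ∈ sgCenter (ZeroUnion S) := by
  intro y
  cases y with
  | none => rfl
  | some p =>
    obtain ⟨j, b⟩ := p
    show zu i a * zu j b = zu j b * zu i a
    rcases eq_or_ne j i with rfl | hj
    · rw [zu_mul_same, zu_mul_same, ha b]
    · rw [zu_mul_ne hj, zu_mul_ne hj.symm]

lemma zu_vertex_repr (x : {v : ZeroUnion S // v ∉ sgCenter (ZeroUnion S)}) :
    ∃ (i : Fin n) (a : S i), x.val = zu i (a) ∧ a ∉ sgCenter (S i) := by
  obtain ⟨val, hx⟩ := x
  cases val with
  | none => exact absurd (fun y => by cases y <;> rfl) hx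
  | some p =>
    obtain ⟨i, a⟩ := p
    exact ⟨i, a, rfl, fun h => hx (zu_center h)⟩

lemma zu_adj_cross {i j : Fin n} (hij : i ≠ j) {a : S i} {b : S j}
    (ha : a ∉ sgCenter (S i)) (hb : b ∉ sgCenter (S j)) :
    (commGraph (ZeroUnion S)).Adj ⟨zu i (a), zu_not_center ha⟩
      ⟨zu j (b), zu_not_center hb⟩ := by
  constructor
  · intro h
    exact hij (zu_fst_eq (congrArg Subtype.val h))
  · show zu i a * zu j (b) = zu j (b) * zu i (a)
    rw [zu_mul_ne hij.symm, zu_mul_ne hij]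

lemma zu_adj_same {i : Fin n} {a b : S i} (ha : a ∉ sgCenter (S i)) (hb : b ∉ sgCenter (S i))
    (hab : a ≠ b) (hc : a * b = b * a) :
    (commGraph (ZeroUnion S)).Adj ⟨zu i (a), zu_not_center ha⟩
      ⟨zu i (b), zu_not_center hb⟩ := by
  constructor
  · intro h
    exact hab ((zu_inj_iff _ _ _).mp (congrArg Subtype.val h))
  · show zu i a * zu i (b) = zu i (b) * zu i (a)
    rw [zu_mul_same, zu_mul_same, hc]

lemma exists_noncomm_pair {i : Fin n} (hi : ¬ ∀ x y : S i, x * y = y * x) :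
    ∃ a b : S i, a ≠ b ∧ a ∉ sgCenter (S i) ∧ b ∉ sgCenter (S i) := by
  push_neg at hi
  obtain ⟨a, b, hab⟩ := hi
  exact ⟨a, b, fun h => hab (h ▸ rfl), fun h => hab (h b), fun h => hab ((h a).symm)⟩

end Helpers

theorem egirth_commGraph_zeroUnion {n : ℕ} (S : Fin n → Type*)
    [∀ i, Semigroup (S i)] [∀ i, Fintype (S i)] [∀ i, Nonempty (S i)]
    (NC : Finset (Fin n)) (hNC : ∀ i, i ∈ NC ↔ ¬ ∀ x y : S i, x * y = y * x) :
    (3 ≤ NC.card ∨ (2 ≤ NC.card ∧ ∃ i ∈ NC, ∃ a b, (commGraph (S i)).Adj a b) →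
      (commGraph (ZeroUnion S)).egirth = 3) ∧
    (NC.card = 2 ∧ (∀ i ∈ NC, ∀ a b, ¬ (commGraph (S i)).Adj a b) →
      (commGraph (ZeroUnion S)).egirth = 4) := by
  constructor
  · rintro (h3 | ⟨h2, i, hiNC, va, vb, hadj⟩)
    · -- three distinct noncommutative components give a triangle
      obtain ⟨i, hi⟩ := Finset.card_pos.mp (show 0 < NC.card by omega)
      have hci : 2 ≤ (NC.erase i).card := by
        rw [Finset.card_erase_of_mem hi]; omega
      obtain ⟨j, hj⟩ := Finset.card_pos.mp (by omega : 0 < (NC.erase i).card)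
      have hcj : 1 ≤ ((NC.erase i).erase j).card := by
        rw [Finset.card_erase_of_mem hj]; omega
      obtain ⟨k, hk⟩ := Finset.card_pos.mp (by omega : 0 < ((NC.erase i).erase j).card)
      obtain ⟨hkj, hk'⟩ := Finset.mem_erase.mp hk
      obtain ⟨hki, hkNC⟩ := Finset.mem_erase.mp hk'
      obtain ⟨hji, hjNC⟩ := Finset.mem_erase.mp hj
      obtain ⟨a, -, -, ha, -⟩ := exists_noncomm_pair ((hNC i).mp hi)
      obtain ⟨b, -, -, hb, -⟩ := exists_noncomm_pair ((hNC j).mp hjNC)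
      obtain ⟨c, -, -, hc, -⟩ := exists_noncomm_pair ((hNC k).mp hkNC)
      exact egirth_eq_three_of_triangle (zu_adj_cross (Ne.symm hji) ha hb)
        (zu_adj_cross (Ne.symm hkj) hb hc) (zu_adj_cross hki hc ha)
    · -- an edge inside one component plus a vertex in another component
      obtain ⟨j, hjNC, hji⟩ := Finset.exists_mem_ne (show 1 < NC.card by omega) i
      obtain ⟨c, -, -, hc, -⟩ := exists_noncomm_pair ((hNC j).mp hjNC)
      have hu : (commGraph (ZeroUnion S)).Adj ⟨zu i (va.1), zu_not_center va.2⟩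
          ⟨zu i (vb.1), zu_not_center vb.2⟩ :=
        zu_adj_same va.2 vb.2 (fun h => hadj.1 (Subtype.ext h)) hadj.2
      exact egirth_eq_three_of_triangle hu
        (zu_adj_cross (fun h => hji h.symm) vb.2 hc)
        (zu_adj_cross hji hc va.2)
  · rintro ⟨h2, hnoedge⟩
    obtain ⟨i, j, hij, hNCeq⟩ := Finset.card_eq_two.mp h2
    have hiNC : i ∈ NC := by rw [hNCeq]; simp
    have hjNC : j ∈ NC := by rw [hNCeq]; simp
    obtain ⟨a, a', haa, ha, ha'⟩ := exists_noncomm_pair ((hNC i).mp hiNC)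
    obtain ⟨b, b', hbb, hb, hb'⟩ := exists_noncomm_pair ((hNC j).mp hjNC)
    refine egirth_eq_four_of_square (zu_adj_cross hij ha hb)
      (zu_adj_cross (Ne.symm hij) hb ha') (zu_adj_cross hij ha' hb')
      (zu_adj_cross (Ne.symm hij) hb' ha) ?_ ?_ ?_
    · intro h
      exact haa ((zu_inj_iff _ _ _).mp (congrArg Subtype.val h))
    · intro h
      exact hbb ((zu_inj_iff _ _ _).mp (congrArg Subtype.val h))
    · -- triangle-free
      intro x y z hxy hyz hzx
      obtain ⟨ix, ax, hxval, hax⟩ := zu_vertex_repr x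
      obtain ⟨iy, ay, hyval, hay⟩ := zu_vertex_repr y
      obtain ⟨iz, az, hzval, haz⟩ := zu_vertex_repr z
      -- any two adjacent vertices lie in different components
      have key : ∀ (p q : Fin n) (u : S p) (v : S q)
          (x' y' : {v : ZeroUnion S // v ∉ sgCenter (ZeroUnion S)}),
          x'.val = zu p (u) → y'.val = zu q (v) → u ∉ sgCenter (S p) →
          v ∉ sgCenter (S q) → (commGraph (ZeroUnion S)).Adj x' y' → p ≠ q := by
        rintro p q u v x' y' hx' hy' hu hv hadj' rfl
        obtain ⟨hne, hcomm⟩ := hadj'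
        rw [hx', hy', zu_mul_same, zu_mul_same] at hcomm
        rw [zu_inj_iff] at hcomm
        have huv : u ≠ v := by
          intro h
          exact hne (Subtype.ext (by rw [hx', hy', h]))
        have hpNC : p ∈ NC := (hNC p).mpr fun hall => hu fun y => hall u y
        exact hnoedge p hpNC ⟨u, hu⟩ ⟨v, hv⟩ ⟨fun h => huv (congrArg Subtype.val h), hcomm⟩
      have hxy' := key ix iy ax ay x y hxval hyval hax hay hxy
      have hyz' := key iy iz ay az y z hyval hzval hay haz hyz
      have hzx' := key iz ix az ax z x hzval hxval haz hax hzx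
      have hxNC : ix ∈ NC := (hNC ix).mpr fun hall => hax fun y => hall ax y
      have hyNC : iy ∈ NC := (hNC iy).mpr fun hall => hay fun y => hall ay y
      have hzNC : iz ∈ NC := (hNC iz).mpr fun hall => haz fun y => hall az y
      rw [hNCeq, Finset.mem_insert, Finset.mem_singleton] at hxNC hyNC hzNC
      rcases hxNC with rfl | rfl <;> rcases hyNC with rfl | rfl <;>
        rcases hzNC with rfl | rfl <;>
        first
          | exact hxy' rfl
          | exact hyz' rfl
          | exact hzx' rfl
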